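/- arXiv:1502.06014 — 4 statements merged into one kernel-verified Lean document; each statement's English description precedes it below -/
import Mathlib

section
/- (Mean value theorem for conformable derivatives) Let 0 ≤ a < b and let f : [a,b] → ℝ be continuous on [a,b] and α-differentiable on (a,b) for some α ∈ (0,1). Then there exists c ∈ (a,b) such that T_α(f)(c) = (f(b) − f(a)) / ((1/α)·b^α − (1/α)·a^α). -/
open Filter Topology Set Real

/-- The conformable fractional derivative: `f` has conformable derivative of order `α`
equal to `L` at `t` if `(f (t + ε * t ^ (1 - α)) - f t) / ε → L` as `ε → 0`. -/
def HasConfDeriv (α : ℝ) (f : ℝ → ℝ) (t L : ℝ) : Prop :=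
  Filter.Tendsto (fun ε : ℝ => (f (t + ε * t ^ (1 - α)) - f t) / ε) (𝓝[≠] 0) (𝓝 L)

lemma conf_to_deriv {α : ℝ} {f : ℝ → ℝ} {t L : ℝ} (ht : 0 < t)
    (h : HasConfDeriv α f t L) : HasDerivAt f (L * t ^ (α - 1)) t := by
  have hc : (0:ℝ) < t ^ (1 - α) := Real.rpow_pos_of_pos ht _
  rw [hasDerivAt_iff_tendsto_slope]
  have hφ : Tendsto (fun x : ℝ => (x - t) / t ^ (1 - α)) (𝓝[≠] t) (𝓝[≠] 0) := by
    apply Tendsto.inf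
    · have : Tendsto (fun x : ℝ => (x - t) / t ^ (1 - α)) (𝓝 t) (𝓝 ((t - t)/ t ^ (1-α))) :=
        (tendsto_id.sub tendsto_const_nhds).div tendsto_const_nhds hc.ne'
      simpa using this
    · refine tendsto_principal_principal.2 ?_
      intro x hx
      simp only [mem_compl_iff, mem_singleton_iff] at hx ⊢
      intro h0
      rcases div_eq_zero_iff.mp h0 with h1 | h1
      · exact hx (by linarith [sub_eq_zero.mp h1])
      · exact hc.ne' h1
  have h2 := h.comp hφ
  have heq : ∀ᶠ x in 𝓝[≠] t,
      ((fun ε : ℝ => (f (t + ε * t ^ (1 - α)) - f t) / ε) ∘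
        fun x : ℝ => (x - t) / t ^ (1 - α)) x = slope f t x * t ^ (1 - α) := by
    refine Eventually.of_forall fun x => ?_
    simp only [Function.comp, slope_def_field]
    rw [div_mul_cancel₀ _ hc.ne', div_div_eq_mul_div]
    ring
  have h3 : Tendsto (fun x => slope f t x * t ^ (1 - α)) (𝓝[≠] t) (𝓝 L) :=
    h2.congr' heq
  have h4 := h3.div_const (t ^ (1 - α))
  have key : L / t ^ (1 - α) = L * t ^ (α - 1) := by
    rw [show α - 1 = -(1 - α) by ring, Real.rpow_neg ht.le, div_eq_mul_inv]
  rw [key] at h4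
  refine h4.congr fun x => ?_
  field_simp

theorem conf_mean_value (α a b : ℝ) (f f' : ℝ → ℝ)
    (hα : α ∈ Set.Ioo (0:ℝ) 1) (ha : 0 ≤ a) (hab : a < b)
    (hcont : ContinuousOn f (Set.Icc a b))
    (hdiff : ∀ t ∈ Set.Ioo a b, HasConfDeriv α f t (f' t)) :
    ∃ c ∈ Set.Ioo a b,
      f' c = (f b - f a) / ((1 / α) * b ^ α - (1 / α) * a ^ α) := by
  obtain ⟨hα0, hα1⟩ := hα
  set g : ℝ → ℝ := fun x => (1 / α) * x ^ α with hg
  have hgc : ContinuousOn g (Set.Icc a b) := by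
    apply ContinuousOn.mul continuousOn_const
    exact fun x _ => (Real.continuousAt_rpow_const x α (Or.inr hα0.le)).continuousWithinAt
  have hgd : ∀ x ∈ Set.Ioo a b, HasDerivAt g (x ^ (α - 1)) x := by
    intro x hx
    have hx0 : (0:ℝ) < x := lt_of_le_of_lt ha hx.1
    have := (Real.hasDerivAt_rpow_const (x := x) (p := α) (Or.inl hx0.ne')).const_mul (1/α)
    rw [← mul_assoc, one_div_mul_cancel hα0.ne', one_mul] at this
    exact this
  have hfd : ∀ x ∈ Set.Ioo a b, HasDerivAt f (f' x * x ^ (α - 1)) x := fun x hx =>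
    conf_to_deriv (lt_of_le_of_lt ha hx.1) (hdiff x hx)
  obtain ⟨c, hc, hkey⟩ := exists_ratio_hasDerivAt_eq_ratio_slope f
    (fun x => f' x * x ^ (α - 1)) hab hcont hfd g (fun x => x ^ (α - 1)) hgc hgd
  refine ⟨c, hc, ?_⟩
  have hc0 : (0:ℝ) < c := lt_of_le_of_lt ha hc.1
  have hcp : (0:ℝ) < c ^ (α - 1) := Real.rpow_pos_of_pos hc0 _
  have hgab : g a < g b := by
    apply mul_lt_mul_of_pos_left _ (by positivity)
    exact Real.rpow_lt_rpow ha hab hα0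
  have h5 : (g b - g a) * f' c = f b - f a := by
    have := hkey
    field_simp at this ⊢
    nlinarith [this]
  rw [eq_div_iff (by simpa [hg] using (sub_ne_zero.mpr hgab.ne'))]
  simp only [hg] at h5 ⊢
  linarith [h5]
end

section
/- If f : [0,∞) → ℝ is continuous and α ∈ (0,1), then for all t > 0, T_α(I_α(f))(t) = f(t), where I_α(f)(t) = ∫₀ᵗ f(x)·x^(α−1) dx. -/
open Filter Topology Set Real

theorem conf_deriv_conf_integral (α t : ℝ) (f : ℝ → ℝ)
    (hα : α ∈ Set.Ioo (0:ℝ) 1) (ht : 0 < t)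
    (hf : ContinuousOn f (Set.Ici 0)) :
    HasConfDeriv α (fun τ : ℝ => ∫ x in (0:ℝ)..τ, f x * x ^ (α - 1)) t (f t) := by
  obtain ⟨hα0, hα1⟩ := hα
  set F : ℝ → ℝ := fun x => f x * x ^ (α - 1) with hF
  set g : ℝ → ℝ := fun τ => ∫ x in (0:ℝ)..τ, F x with hg
  -- F is continuous on (0, ∞)
  have hFcont : ContinuousOn F (Set.Ioi (0:ℝ)) := by
    apply ContinuousOn.mul (g := fun x : ℝ => x ^ (α - 1)) (hf.mono fun x (hx : x ∈ Set.Ioi (0:ℝ)) => Set.mem_Ici.mpr (le_of_lt hx))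
    intro x hx
    exact (Real.continuousAt_rpow_const x (α - 1) (Or.inl (ne_of_gt hx))).continuousWithinAt
  -- integrability on [0, t]
  have hint : IntervalIntegrable F MeasureTheory.volume 0 t := by
    have h1 : IntervalIntegrable (fun x : ℝ => x ^ (α - 1)) MeasureTheory.volume 0 t :=
      intervalIntegral.intervalIntegrable_rpow' (by linarith)
    exact h1.continuousOn_mul (hf.mono (by
      rw [Set.uIcc_of_le ht.le]
      exact fun x hx => hx.1))
  -- continuity of F at t
  have hFt : ContinuousAt F t := by
    have := hFcont.continuousAt (Ioi_mem_nhds ht)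
    exact this
  have hmeas : StronglyMeasurableAtFilter F (𝓝 t) MeasureTheory.volume :=
    hFcont.stronglyMeasurableAtFilter isOpen_Ioi t ht
  have hderiv : HasDerivAt g (F t) t :=
    intervalIntegral.integral_hasDerivAt_right hint hmeas hFt
  set c : ℝ := t ^ (1 - α) with hc
  have hcpos : 0 < c := Real.rpow_pos_of_pos ht _
  -- slope formulation
  have hslope : Tendsto (slope g t) (𝓝[≠] t) (𝓝 (F t)) :=
    hasDerivAt_iff_tendsto_slope.mp hderiv
  have hmap : Tendsto (fun ε : ℝ => t + ε * c) (𝓝[≠] 0) (𝓝[≠] t) := by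
    apply tendsto_nhdsWithin_of_tendsto_nhds_of_eventually_within
    · have : Tendsto (fun ε : ℝ => t + ε * c) (𝓝 0) (𝓝 (t + 0 * c)) := by
        exact (tendsto_id.mul_const c).const_add t
      simpa using this.mono_left nhdsWithin_le_nhds
    · filter_upwards [self_mem_nhdsWithin] with ε (hε : ε ≠ 0)
      simp only [Set.mem_compl_iff, Set.mem_singleton_iff]
      intro h
      apply hε
      have : ε * c = 0 := by linarith
      exact (mul_eq_zero.mp this).resolve_right hcpos.ne'
  have h1 : Tendsto (fun ε : ℝ => slope g t (t + ε * c) * c) (𝓝[≠] 0) (𝓝 (F t * c)) :=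
    ((hslope.comp hmap).mul_const c)
  have hFtc : F t * c = f t := by
    rw [hF, hc]
    rw [mul_assoc, ← Real.rpow_add ht]
    norm_num
  rw [hFtc] at h1
  refine h1.congr' ?_
  filter_upwards [self_mem_nhdsWithin] with ε (hε : ε ≠ 0)
  have hεc : ε * c ≠ 0 := mul_ne_zero hε hcpos.ne'
  show slope g t (t + ε * c) * c = (g (t + ε * c) - g t) / ε
  rw [slope_def_field]
  field_simp
  ring
end

section
/- Let X be a Banach space and A the α-infinitesimal generator of a continuously α-differentiable c₀ α-fractional semigroup {T(t)}_{t≥0} on X, 0 < α ≤ 1. If u₀ ∈ D(A), then u(t) = T(t)u₀ is a solution of the α-abstract Cauchy problem u^{(α)}(t) = Au(t) for t > 0, u(0) = u₀. -/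
open Filter Topology Set Real

/-- Vector-valued conformable fractional derivative of order `α` at `t`. -/
def HasConfDerivAt {X : Type*} [NormedAddCommGroup X] [NormedSpace ℝ X]
    (α : ℝ) (f : ℝ → X) (t : ℝ) (L : X) : Prop :=
  Filter.Tendsto (fun ε : ℝ => (ε : ℝ)⁻¹ • (f (t + ε * t ^ (1 - α)) - f t)) (𝓝[≠] 0) (𝓝 L)

lemma HasConfDerivAt.hasDerivAt' {X : Type*} [NormedAddCommGroup X] [NormedSpace ℝ X]
    {α : ℝ} {f : ℝ → X} {t : ℝ} (ht : 0 < t) {L : X}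
    (h : HasConfDerivAt α f t L) : HasDerivAt f (t ^ (α - 1) • L) t := by
  set c : ℝ := t ^ (1 - α) with hc
  have hc0 : 0 < c := Real.rpow_pos_of_pos ht _
  rw [hasDerivAt_iff_tendsto_slope_zero]
  have hmap : Tendsto (fun h : ℝ => h / c) (𝓝[≠] (0:ℝ)) (𝓝[≠] (0:ℝ)) := by
    rw [tendsto_nhdsWithin_iff]
    constructor
    · have : Tendsto (fun h : ℝ => h / c) (𝓝 0) (𝓝 (0 / c)) :=
        (continuous_id.div_const c).tendsto 0
      simpa using this.mono_left nhdsWithin_le_nhds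
    · filter_upwards [self_mem_nhdsWithin] with h hh
      simp only [mem_compl_iff, mem_singleton_iff] at hh ⊢
      exact fun h0 => hh (by field_simp at h0; simpa using h0)
  have key : Tendsto (fun h : ℝ =>
      c⁻¹ • (((h / c))⁻¹ • (f (t + (h / c) * c) - f t))) (𝓝[≠] (0:ℝ)) (𝓝 (c⁻¹ • L)) :=
    ((h.comp hmap).const_smul c⁻¹)
  have heq : (fun h : ℝ => c⁻¹ • (((h / c))⁻¹ • (f (t + (h / c) * c) - f t)))
      = fun h : ℝ => h⁻¹ • (f (t + h) - f t) := by
    funext h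
    rw [div_mul_cancel₀ _ hc0.ne', smul_smul]
    congr 1
    rw [inv_div, ← mul_div_assoc, inv_mul_cancel₀ hc0.ne', one_div]
  have hL : c⁻¹ • L = t ^ (α - 1) • L := by
    rw [hc, ← Real.rpow_neg ht.le]
    ring_nf
  rw [heq] at key
  rwa [hL] at key

lemma rpow_rpow_inv' {a α : ℝ} (hα : α ≠ 0) (ha : 0 ≤ a) : (a ^ α) ^ (1/α) = a := by
  rw [← Real.rpow_mul ha, mul_one_div, div_self hα, Real.rpow_one]

lemma key_eq {X : Type*} [NormedAddCommGroup X] [NormedSpace ℝ X]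
    {α : ℝ} (hα0 : 0 < α)
    (T : ℝ → (X →L[ℝ] X)) (T' : ℝ → X → X)
    (hlaw : ∀ s ≥ (0:ℝ), ∀ t ≥ (0:ℝ),
      T ((s + t) ^ (1 / α)) = T (s ^ (1 / α)) ∘L T (t ^ (1 / α)))
    (hderiv : ∀ t > (0:ℝ), ∀ x : X, HasConfDerivAt α (fun τ => T τ x) t (T' t x))
    {s t : ℝ} (hs : 0 < s) (ht : 0 < t) (x : X) :
    T' s (T t x) = T' ((s^α + t^α) ^ (1/α)) x := by
  set g : ℝ → ℝ := fun τ => (τ^α + t^α) ^ (1/α) with hg_def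
  have hB : 0 < s^α + t^α :=
    add_pos (Real.rpow_pos_of_pos hs _) (Real.rpow_pos_of_pos ht _)
  have hgs : 0 < g s := Real.rpow_pos_of_pos hB _
  -- derivative of g at s
  have hg1 : HasDerivAt (fun τ : ℝ => τ^α + t^α) (α * s^(α-1)) s :=
    (Real.hasDerivAt_rpow_const (Or.inl hs.ne')).add_const _
  have hg2 : HasDerivAt (fun y : ℝ => y ^ (1/α)) ((1/α) * (s^α + t^α)^(1/α - 1)) (s^α + t^α) :=
    Real.hasDerivAt_rpow_const (Or.inl hB.ne')
  have hg : HasDerivAt g (s^(α-1) * (g s)^(1-α)) s := by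
    have hcomp := hg2.comp s hg1
    refine hcomp.congr_deriv (Eq.symm ?_)
    have h1 : (g s)^(1-α) = (s^α + t^α)^(1/α - 1) := by
      rw [hg_def, ← Real.rpow_mul hB.le]
      congr 1
      field_simp
    rw [h1]
    field_simp
  -- derivative of r ↦ T r x at g s
  have hF : HasDerivAt (fun r => T r x) ((g s)^(α-1) • T' (g s) x) (g s) :=
    (hderiv (g s) hgs x).hasDerivAt' hgs
  have hcomp : HasDerivAt (fun τ => T (g τ) x)
      ((s^(α-1) * (g s)^(1-α)) • (g s)^(α-1) • T' (g s) x) s :=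
    hF.scomp s hg
  have hsc : (s^(α-1) * (g s)^(1-α)) • ((g s)^(α-1) • T' (g s) x) = s^(α-1) • T' (g s) x := by
    rw [smul_smul, mul_assoc, ← Real.rpow_add hgs]
    norm_num
  rw [hsc] at hcomp
  -- the composite agrees with τ ↦ T τ (T t x) near s
  have heq : (fun τ => T (g τ) x) =ᶠ[𝓝 s] (fun τ => T τ (T t x)) := by
    filter_upwards [Ioi_mem_nhds hs] with τ hτ
    have hτ0 : (0:ℝ) < τ := hτ
    have h1 := hlaw (τ^α) (Real.rpow_nonneg hτ0.le _) (t^α) (Real.rpow_nonneg ht.le _)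
    rw [rpow_rpow_inv' hα0.ne' hτ0.le, rpow_rpow_inv' hα0.ne' ht.le] at h1
    simp only [hg_def]
    rw [h1, ContinuousLinearMap.comp_apply]
  have hD : HasDerivAt (fun τ => T τ (T t x)) (s^(α-1) • T' (g s) x) s :=
    hcomp.congr_of_eventuallyEq heq.symm
  have hD' : HasDerivAt (fun τ => T τ (T t x)) (s^(α-1) • T' s (T t x)) s :=
    (hderiv s hs (T t x)).hasDerivAt' hs
  have huniq := hD'.unique hD
  have hne : (s:ℝ)^(α-1) ≠ 0 := (Real.rpow_pos_of_pos hs _).ne'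
  exact smul_right_injective X hne huniq

/-- If `u₀` is in the domain of the generator `A` (with `A u₀ = Au₀`), then
`u t = T t u₀` solves the α-abstract Cauchy problem `u^{(α)} = A u`, `u 0 = u₀`. -/
theorem conf_abstract_cauchy_existence
    {X : Type*} [NormedAddCommGroup X] [NormedSpace ℝ X] [CompleteSpace X]
    (α : ℝ) (hα : α ∈ Set.Ioc (0:ℝ) 1)
    (T : ℝ → (X →L[ℝ] X)) (T' : ℝ → X → X)
    (hT0 : T 0 = 1)
    (hlaw : ∀ s ≥ (0:ℝ), ∀ t ≥ (0:ℝ),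
      T ((s + t) ^ (1 / α)) = T (s ^ (1 / α)) ∘L T (t ^ (1 / α)))
    (hc0 : ∀ x : X, Filter.Tendsto (fun t => T t x) (𝓝[>] 0) (𝓝 x))
    (hderiv : ∀ t > (0:ℝ), ∀ x : X, HasConfDerivAt α (fun τ => T τ x) t (T' t x))
    (hcont : ∀ x : X, ContinuousOn (fun t => T' t x) (Set.Ioi 0))
    (u₀ Au₀ : X)
    (hgen : Filter.Tendsto (fun t => T' t u₀) (𝓝[>] 0) (𝓝 Au₀)) :
    -- the function u(t) = T(t)u₀ :
    (T 0 u₀ = u₀) ∧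
    ContinuousOn (fun t => T t u₀) (Set.Ici 0) ∧
    ContinuousOn (fun t => T' t u₀) (Set.Ioi 0) ∧
    (∀ t > (0:ℝ),
      -- u is α-differentiable at t with u^{(α)}(t) = T'(t)u₀ …
      HasConfDerivAt α (fun τ => T τ u₀) t (T' t u₀) ∧
      -- … and u(t) = T(t)u₀ lies in D(A) with A u(t) = u^{(α)}(t)
      Filter.Tendsto (fun s => T' s (T t u₀)) (𝓝[>] 0) (𝓝 (T' t u₀))) := by
  obtain ⟨hα0, hα1⟩ := hα
  have hT0u : T 0 u₀ = u₀ := by rw [hT0]; rfl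
  refine ⟨hT0u, ?_, hcont u₀, ?_⟩
  · -- continuity on Ici 0
    intro t ht
    rcases eq_or_lt_of_le (Set.mem_Ici.mp ht) with rfl | htpos
    · -- at zero
      have h5 : Tendsto (fun t => T t u₀) (𝓝[Set.Ici 0] 0) (𝓝 u₀) := by
        have hins : Set.Ici (0:ℝ) = insert 0 (Set.Ioi 0) := by
          ext y; simp [le_iff_lt_or_eq, or_comm, eq_comm]
        rw [hins, nhdsWithin_insert]
        refine Tendsto.sup ?_ (hc0 u₀)
        rw [tendsto_pure_left]
        intro s hs
        rw [hT0u]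
        exact mem_of_mem_nhds hs
      simpa [ContinuousWithinAt, hT0u] using h5
    · exact (((hderiv t htpos u₀).hasDerivAt' htpos).continuousAt).continuousWithinAt
  · intro t ht
    refine ⟨hderiv t ht u₀, ?_⟩
    -- limit of T' s (T t u₀) as s → 0⁺
    have hg0 : Tendsto (fun s : ℝ => (s^α + t^α) ^ (1/α)) (𝓝[>] (0:ℝ)) (𝓝 t) := by
      have h1 : Tendsto (fun s : ℝ => s ^ α) (𝓝[>] (0:ℝ)) (𝓝 (0:ℝ)) := by
        have := (Real.continuousAt_rpow_const 0 α (Or.inr hα0.le)).tendsto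
        rw [Real.zero_rpow hα0.ne'] at this
        exact this.mono_left nhdsWithin_le_nhds
      have h2 : Tendsto (fun s : ℝ => s ^ α + t ^ α) (𝓝[>] (0:ℝ)) (𝓝 (t ^ α)) := by
        simpa using h1.add_const (t ^ α)
      have h3 : ContinuousAt (fun y : ℝ => y ^ (1/α)) (t ^ α) :=
        Real.continuousAt_rpow_const _ _ (Or.inl (Real.rpow_pos_of_pos ht _).ne')
      have h4 := h3.tendsto.comp h2
      rwa [rpow_rpow_inv' hα0.ne' ht.le] at h4
    have hTA : Tendsto (fun s : ℝ => T' ((s^α + t^α) ^ (1/α)) u₀) (𝓝[>] (0:ℝ)) (𝓝 (T' t u₀)) :=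
      (((hcont u₀).continuousAt (Ioi_mem_nhds ht)).tendsto).comp hg0
    refine hTA.congr' ?_
    filter_upwards [self_mem_nhdsWithin] with s hs
    exact (key_eq hα0 T T' hlaw hderiv hs ht u₀).symm
end

section
/- Let X be a Banach space and A the α-infinitesimal generator of a continuously α-differentiable c₀ α-fractional semigroup {T(t)}_{t≥0}, 0 < α ≤ 1. If u₀ ∈ D(A), then the α-abstract Cauchy problem u^{(α)}(t) = Au(t), u(0) = u₀ has at most one solution; any solution equals u(t) = T(t)u₀. -/
open Filter Topology Set Real

-- Lemma A: conformable derivative implies ordinary derivative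
theorem lemA {X : Type*} [NormedAddCommGroup X] [NormedSpace ℝ X]
    (α : ℝ) (f : ℝ → X) (t : ℝ) (ht : 0 < t) (L : X)
    (hL : HasConfDerivAt α f t L) : HasDerivAt f (t ^ (α - 1) • L) t := by
  have hc : (0:ℝ) < t ^ (1 - α) := Real.rpow_pos_of_pos ht _
  set c := t ^ (1 - α) with hcdef
  have hm : Tendsto (fun x => (x - t) / c) (𝓝[≠] t) (𝓝[≠] (0:ℝ)) := by
    rw [tendsto_nhdsWithin_iff]
    refine ⟨?_, ?_⟩
    · have h1 : Tendsto (fun x : ℝ => (x - t) / c) (𝓝 t) (𝓝 ((t - t) / c)) :=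
        ((continuous_id.sub continuous_const).div_const c).tendsto t
      simpa using h1.mono_left nhdsWithin_le_nhds
    · filter_upwards [self_mem_nhdsWithin] with x hx
      simp only [mem_compl_iff, mem_singleton_iff] at hx ⊢
      exact div_ne_zero (sub_ne_zero.mpr hx) hc.ne'
  have h2 := hL.comp hm
  have h3 : Tendsto (fun x => c • slope f t x) (𝓝[≠] t) (𝓝 L) := by
    refine h2.congr' ?_
    filter_upwards [self_mem_nhdsWithin] with x hx
    have hxt : x - t ≠ 0 := sub_ne_zero.mpr hx
    have hx1 : t + (x - t) / c * c = x := by field_simp; ring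
    rw [Function.comp_apply, hx1, slope_def_module, smul_smul]
    congr 1
    field_simp
  have h4 := h3.const_smul c⁻¹
  rw [hasDerivAt_iff_tendsto_slope]
  have hceq : t ^ (α - 1) = c⁻¹ := by
    rw [hcdef, ← Real.rpow_neg ht.le]
    norm_num
  rw [hceq]
  refine h4.congr ?_
  intro x
  rw [inv_smul_smul₀ hc.ne']

-- Lemma B: chain rule through r ↦ r^(1/α)
theorem lemB {X : Type*} [NormedAddCommGroup X] [NormedSpace ℝ X]
    (α : ℝ) (hα0 : 0 < α) (f : ℝ → X) (τ : ℝ) (hτ : 0 < τ) (L : X)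
    (hL : HasConfDerivAt α f (τ ^ (1/α)) L) :
    HasDerivAt (fun r : ℝ => f (r ^ (1/α))) ((1/α) • L) τ := by
  set β := 1/α with hβ
  have htβ : 0 < τ ^ β := Real.rpow_pos_of_pos hτ _
  have h1 : HasDerivAt f ((τ ^ β) ^ (α - 1) • L) (τ ^ β) := lemA α f _ htβ L hL
  have h2 : HasDerivAt (fun r : ℝ => r ^ β) (β * τ ^ (β - 1)) τ :=
    Real.hasDerivAt_rpow_const (Or.inl hτ.ne')
  have h3 := h1.scomp τ h2
  have hβα : β * α = 1 := by rw [hβ]; field_simp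
  have hkey : τ ^ (β - 1) * τ ^ (β * (α - 1)) = 1 := by
    rw [← Real.rpow_add hτ]
    have h0 : β - 1 + β * (α - 1) = 0 := by linear_combination hβα
    rw [h0, Real.rpow_zero]
  have hcoef : (β * τ ^ (β - 1)) • ((τ ^ β) ^ (α - 1) • L) = β • L := by
    rw [smul_smul, ← Real.rpow_mul hτ.le, mul_assoc, hkey, mul_one]
  rw [← hcoef]
  exact h3

/-- Uniqueness for the α-abstract Cauchy problem: any solution `u` with `u 0 = u₀`
coincides with `t ↦ T t u₀`. Membership of `y` in `D(A)` with value `Ay` is expressed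
by `Tendsto (fun s => T' s y) (𝓝[>] 0) (𝓝 Ay)`. -/
theorem conf_abstract_cauchy_uniqueness
    {X : Type*} [NormedAddCommGroup X] [NormedSpace ℝ X] [CompleteSpace X]
    (α : ℝ) (hα : α ∈ Set.Ioc (0:ℝ) 1)
    (T : ℝ → (X →L[ℝ] X)) (T' : ℝ → X → X)
    (hT0 : T 0 = 1)
    (hlaw : ∀ s ≥ (0:ℝ), ∀ t ≥ (0:ℝ),
      T ((s + t) ^ (1 / α)) = T (s ^ (1 / α)) ∘L T (t ^ (1 / α)))
    (hc0 : ∀ x : X, Filter.Tendsto (fun t => T t x) (𝓝[>] 0) (𝓝 x))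
    (hTderiv : ∀ t > (0:ℝ), ∀ x : X, HasConfDerivAt α (fun τ => T τ x) t (T' t x))
    (hTcont : ∀ x : X, ContinuousOn (fun t => T' t x) (Set.Ioi 0))
    (u₀ Au₀ : X)
    (hgen : Filter.Tendsto (fun t => T' t u₀) (𝓝[>] 0) (𝓝 Au₀))
    -- a solution u of the α-abstract Cauchy problem, with α-derivative u' and A u(t) = Au t :
    (u u' Au : ℝ → X)
    (hu0 : u 0 = u₀)
    (hucont : ContinuousOn u (Set.Ici 0))
    (huderiv : ∀ t > (0:ℝ), HasConfDerivAt α u t (u' t))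
    (hucont' : ContinuousOn u' (Set.Ioi 0))
    (hdom : ∀ t > (0:ℝ), Filter.Tendsto (fun s => T' s (u t)) (𝓝[>] 0) (𝓝 (Au t)))
    (heq : ∀ t > (0:ℝ), u' t = Au t) :
    ∀ t ≥ (0:ℝ), u t = T t u₀ := by
  obtain ⟨hα0, hα1⟩ := hα
  have hβ0 : (0:ℝ) < 1/α := by positivity
  -- the map q ↦ q^(1/α) sends 𝓝[>]0 to 𝓝[>]0
  have hrpow_map : Tendsto (fun q : ℝ => q ^ (1/α)) (𝓝[>] (0:ℝ)) (𝓝[>] (0:ℝ)) := by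
    rw [tendsto_nhdsWithin_iff]
    constructor
    · have h1 : ContinuousAt (fun q : ℝ => q ^ (1/α)) 0 :=
        Real.continuousAt_rpow_const 0 (1/α) (Or.inr hβ0.le)
      have h2 := h1.tendsto.mono_left (nhdsWithin_le_nhds (s := Ioi (0:ℝ)))
      have h3 : ((0:ℝ) : ℝ) ^ (1/α) = 0 := Real.zero_rpow hβ0.ne'
      rwa [h3] at h2
    · filter_upwards [self_mem_nhdsWithin] with q hq
      exact Real.rpow_pos_of_pos hq _
  -- strong derivative of the reparametrized semigroup
  have hSderiv : ∀ r > (0:ℝ), ∀ x : X,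
      HasDerivAt (fun ρ : ℝ => T (ρ ^ (1/α)) x) ((1/α) • T' (r ^ (1/α)) x) r := by
    intro r hr x
    exact lemB α hα0 (fun t => T t x) r hr _
      (hTderiv (r ^ (1/α)) (Real.rpow_pos_of_pos hr _) x)
  -- semigroup law pointwise
  have hSadd : ∀ σ ρ : ℝ, 0 ≤ σ → 0 ≤ ρ → ∀ x : X,
      T ((σ + ρ) ^ (1/α)) x = T (σ ^ (1/α)) (T (ρ ^ (1/α)) x) := by
    intro σ ρ hσ hρ x
    rw [hlaw σ hσ ρ hρ]; rfl
  -- c₀ property in reparametrized time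
  have hSc0 : ∀ x : X, Tendsto (fun r : ℝ => T (r ^ (1/α)) x) (𝓝[>] 0) (𝓝 x) :=
    fun x => (hc0 x).comp hrpow_map
  -- derivative of v := u ∘ rpow
  have hvderiv : ∀ τ > (0:ℝ),
      HasDerivAt (fun r : ℝ => u (r ^ (1/α))) ((1/α) • Au (τ ^ (1/α))) τ := by
    intro τ hτ
    have h := lemB α hα0 u τ hτ _ (huderiv (τ ^ (1/α)) (Real.rpow_pos_of_pos hτ _))
    rwa [heq _ (Real.rpow_pos_of_pos hτ _)] at h
  -- continuity of v at 0 from the right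
  have hvc0 : Tendsto (fun r : ℝ => u (r ^ (1/α))) (𝓝[>] 0) (𝓝 u₀) := by
    have h1 : Tendsto (fun q : ℝ => q ^ (1/α)) (𝓝[>] (0:ℝ)) (𝓝[Ici 0] (0:ℝ)) :=
      hrpow_map.mono_right (nhdsWithin_mono _ Ioi_subset_Ici_self)
    have h2 := (hucont 0 self_mem_Ici).tendsto.comp h1
    rwa [hu0] at h2
  -- commutation: T'(r^(1/α)) (u t) = T((r)^(1/α)) applied to Au t
  have hcomm : ∀ r > (0:ℝ), ∀ t > (0:ℝ),
      T' (r ^ (1/α)) (u t) = T (r ^ (1/α)) (Au t) := by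
    intro r hr t ht
    have hstep : ∀ q > (0:ℝ),
        T' ((r + q) ^ (1/α)) (u t) = T (r ^ (1/α)) (T' (q ^ (1/α)) (u t)) := by
      intro q hq
      have h1 : HasDerivAt (fun p : ℝ => T ((r + p) ^ (1/α)) (u t))
          ((1/α) • T' ((r + q) ^ (1/α)) (u t)) q := by
        have hin : HasDerivAt (fun p : ℝ => r + p) 1 q := (hasDerivAt_id q).const_add r
        have := (hSderiv (r + q) (by linarith) (u t)).scomp q hin
        simpa [Function.comp_def] using this
      have h2 : HasDerivAt (fun p : ℝ => T (r ^ (1/α)) (T (p ^ (1/α)) (u t)))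
          (T (r ^ (1/α)) ((1/α) • T' (q ^ (1/α)) (u t))) q :=
        (T (r ^ (1/α))).hasFDerivAt.comp_hasDerivAt q (hSderiv q hq (u t))
      have h2' : HasDerivAt (fun p : ℝ => T ((r + p) ^ (1/α)) (u t))
          (T (r ^ (1/α)) ((1/α) • T' (q ^ (1/α)) (u t))) q := by
        refine h2.congr_of_eventuallyEq ?_
        filter_upwards [eventually_gt_nhds hq] with p hp
        exact hSadd r p hr.le hp.le (u t)
      have huniq := h1.unique h2'
      rw [map_smul] at huniq
      exact smul_right_injective X (by positivity : (1:ℝ)/α ≠ 0) huniq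
    have hL : Tendsto (fun q : ℝ => T' ((r + q) ^ (1/α)) (u t)) (𝓝[>] 0)
        (𝓝 (T' (r ^ (1/α)) (u t))) := by
      have hcont : ContinuousAt (fun ρ => T' ρ (u t)) (r ^ (1/α)) :=
        (hTcont (u t)).continuousAt (Ioi_mem_nhds (Real.rpow_pos_of_pos hr _))
      have haff : Tendsto (fun q : ℝ => r + q) (𝓝[>] 0) (𝓝 r) := by
        have hcadd : Continuous (fun q : ℝ => r + q) := continuous_const.add continuous_id
        have := (hcadd.tendsto 0).mono_left (nhdsWithin_le_nhds (s := Ioi (0:ℝ)))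
        simpa using this
      have hin : Tendsto (fun q : ℝ => (r + q) ^ (1/α)) (𝓝[>] 0) (𝓝 (r ^ (1/α))) :=
        ((Real.continuousAt_rpow_const r (1/α) (Or.inl hr.ne')).tendsto).comp haff
      exact hcont.tendsto.comp hin
    have hR : Tendsto (fun q : ℝ => T (r ^ (1/α)) (T' (q ^ (1/α)) (u t))) (𝓝[>] 0)
        (𝓝 (T (r ^ (1/α)) (Au t))) :=
      ((T (r ^ (1/α))).continuous.tendsto _).comp ((hdom t ht).comp hrpow_map)
    refine tendsto_nhds_unique (hL.congr' ?_) hR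
    filter_upwards [self_mem_nhdsWithin] with q hq
    exact hstep q hq
  -- uniform bound on compact intervals away from 0
  have hbound : ∀ a b : ℝ, 0 < a → ∃ M : ℝ, ∀ r ∈ Icc a b, ‖T (r ^ (1/α))‖ ≤ M := by
    intro a b ha
    by_cases hab : a ≤ b
    · have hpt : ∀ x : X, ∃ C, ∀ i : (Icc a b), ‖T ((i : ℝ) ^ (1/α)) x‖ ≤ C := by
        intro x
        have hcont : ContinuousOn (fun r => T (r ^ (1/α)) x) (Icc a b) := by
          intro r hr
          exact ((hSderiv r (lt_of_lt_of_le ha hr.1) x).continuousAt).continuousWithinAt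
        obtain ⟨C, hC⟩ := isCompact_Icc.exists_bound_of_continuousOn hcont
        exact ⟨C, fun i => hC i.1 i.2⟩
      obtain ⟨M, hM⟩ := banach_steinhaus (g := fun i : (Icc a b) => T ((i : ℝ) ^ (1/α))) hpt
      exact ⟨M, fun r hr => hM ⟨r, hr⟩⟩
    · exact ⟨0, fun r hr => absurd (hr.1.trans hr.2) hab⟩
  -- the map s ↦ T((τ-s)^(1/α)) (u (s^(1/α))) has zero derivative on (0, τ)
  have hgderiv : ∀ τ > (0:ℝ), ∀ s ∈ Ioo (0:ℝ) τ,
      HasDerivAt (fun p : ℝ => T ((τ - p) ^ (1/α)) (u (p ^ (1/α)))) 0 s := by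
    intro τ hτ s hs
    obtain ⟨hs0, hsτ⟩ := hs
    have hr0 : 0 < τ - s := by linarith
    obtain ⟨M, hM⟩ := hbound ((τ - s)/2) (τ - s + 1) (by linarith)
    set v : ℝ → X := fun p => u (p ^ (1/α)) with hvdef
    set vs' : X := (1/α) • Au (s ^ (1/α)) with hvs'def
    set g : ℝ → X := fun p => T ((τ - p) ^ (1/α)) (v p) with hgdef
    -- the decomposition of the slope
    have hsplit : ∀ x : ℝ, slope g s x =
        T ((τ - x) ^ (1/α)) (slope v s x - vs') + T ((τ - x) ^ (1/α)) vs'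
          + slope (fun y => T ((τ - y) ^ (1/α)) (v s)) s x := by
      intro x
      simp only [hgdef, slope_def_module, map_sub, map_smul, smul_sub]
      abel
    -- term 2 limit
    have hT2 : Tendsto (fun x => T ((τ - x) ^ (1/α)) vs') (𝓝[≠] s)
        (𝓝 (T ((τ - s) ^ (1/α)) vs')) := by
      have hc1 : ContinuousAt (fun ρ : ℝ => T (ρ ^ (1/α)) vs') (τ - s) :=
        (hSderiv (τ - s) hr0 vs').continuousAt
      have hc2 : Tendsto (fun x : ℝ => τ - x) (𝓝[≠] s) (𝓝 (τ - s)) :=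
        ((continuous_const.sub continuous_id).tendsto s).mono_left nhdsWithin_le_nhds
      exact hc1.tendsto.comp hc2
    -- term 3 limit
    have hT3 : HasDerivAt (fun y : ℝ => T ((τ - y) ^ (1/α)) (v s))
        (-((1/α) • T' ((τ - s) ^ (1/α)) (v s))) s := by
      have hin : HasDerivAt (fun y : ℝ => τ - y) (-1) s := (hasDerivAt_id s).const_sub τ
      have := (hSderiv (τ - s) hr0 (v s)).scomp s hin
      simpa [Function.comp_def] using this
    have hT3' : Tendsto (slope (fun y : ℝ => T ((τ - y) ^ (1/α)) (v s)) s) (𝓝[≠] s)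
        (𝓝 (-((1/α) • T' ((τ - s) ^ (1/α)) (v s)))) :=
      hasDerivAt_iff_tendsto_slope.mp hT3
    -- term 1 limit (squeeze)
    have hvslope : Tendsto (fun x => slope v s x - vs') (𝓝[≠] s) (𝓝 0) := by
      have := hasDerivAt_iff_tendsto_slope.mp (hvderiv s hs0)
      have h2 := this.sub_const vs'
      simpa [hvs'def] using h2
    have hT1 : Tendsto (fun x => T ((τ - x) ^ (1/α)) (slope v s x - vs')) (𝓝[≠] s)
        (𝓝 0) := by
      apply squeeze_zero_norm' ?_ (by simpa using (hvslope.norm.const_mul M))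
      have hev : ∀ᶠ x in 𝓝[≠] s, τ - x ∈ Icc ((τ - s)/2) (τ - s + 1) := by
        have : ∀ᶠ x in 𝓝 s, τ - x ∈ Icc ((τ - s)/2) (τ - s + 1) := by
          have hcs : ContinuousAt (fun x : ℝ => τ - x) s :=
            (continuous_const.sub continuous_id).continuousAt
          have hmem : Icc ((τ - s)/2) (τ - s + 1) ∈ 𝓝 (τ - s) :=
            Icc_mem_nhds (by linarith) (by linarith)
          exact hcs hmem
        exact this.filter_mono nhdsWithin_le_nhds
      filter_upwards [hev] with x hx
      calc ‖T ((τ - x) ^ (1/α)) (slope v s x - vs')‖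
          ≤ ‖T ((τ - x) ^ (1/α))‖ * ‖slope v s x - vs'‖ :=
            (T ((τ - x) ^ (1/α))).le_opNorm _
        _ ≤ M * ‖slope v s x - vs'‖ :=
            mul_le_mul_of_nonneg_right (hM _ hx) (norm_nonneg _)
    -- combine
    have hsum : Tendsto (slope g s) (𝓝[≠] s)
        (𝓝 (0 + T ((τ - s) ^ (1/α)) vs' + -((1/α) • T' ((τ - s) ^ (1/α)) (v s)))) := by
      have := (hT1.add hT2).add hT3'
      exact this.congr (fun x => (hsplit x).symm)
    have hzero : (0:X) + T ((τ - s) ^ (1/α)) vs'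
        + -((1/α) • T' ((τ - s) ^ (1/α)) (v s)) = 0 := by
      have hco := hcomm (τ - s) hr0 (s ^ (1/α)) (Real.rpow_pos_of_pos hs0 _)
      rw [hvs'def, map_smul, hvdef]
      simp only []
      rw [hco]
      abel
    rw [hasDerivAt_iff_tendsto_slope]
    rw [← hzero]
    exact hsum
  -- constancy on subintervals
  have hconst : ∀ τ > (0:ℝ), ∀ s₁ s₂ : ℝ, 0 < s₁ → s₁ ≤ s₂ → s₂ < τ →
      T ((τ - s₂) ^ (1/α)) (u (s₂ ^ (1/α))) = T ((τ - s₁) ^ (1/α)) (u (s₁ ^ (1/α))) := by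
    intro τ hτ s₁ s₂ hs₁ h12 h2τ
    have hcont : ContinuousOn (fun p : ℝ => T ((τ - p) ^ (1/α)) (u (p ^ (1/α)))) (Icc s₁ s₂) := by
      intro x hx
      exact (hgderiv τ hτ x ⟨lt_of_lt_of_le hs₁ hx.1, lt_of_le_of_lt hx.2 h2τ⟩).continuousAt.continuousWithinAt
    have hder : ∀ x ∈ Ico s₁ s₂, HasDerivWithinAt
        (fun p : ℝ => T ((τ - p) ^ (1/α)) (u (p ^ (1/α)))) 0 (Ici x) x := by
      intro x hx
      exact (hgderiv τ hτ x ⟨lt_of_lt_of_le hs₁ hx.1, lt_trans hx.2 h2τ⟩).hasDerivWithinAt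
    exact constant_of_has_deriv_right_zero hcont hder s₂ (right_mem_Icc.mpr h12)
  -- endpoint at τ
  have key2 : ∀ τ > (0:ℝ), ∀ s : ℝ, 0 < s → s < τ →
      u (τ ^ (1/α)) = T ((τ - s) ^ (1/α)) (u (s ^ (1/α))) := by
    intro τ hτ s hs hsτ
    have hfun : ∀ h > (0:ℝ),
        T (h ^ (1/α)) (u (τ ^ (1/α))) = T ((τ - s + h) ^ (1/α)) (u (s ^ (1/α))) := by
      intro h hh
      have := hconst (τ + h) (by linarith) s τ hs hsτ.le (by linarith)
      rw [show τ + h - τ = h by ring, show τ + h - s = τ - s + h by ring] at this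
      exact this
    have h1 : Tendsto (fun h : ℝ => T (h ^ (1/α)) (u (τ ^ (1/α)))) (𝓝[>] 0)
        (𝓝 (u (τ ^ (1/α)))) := hSc0 _
    have h2 : Tendsto (fun h : ℝ => T ((τ - s + h) ^ (1/α)) (u (s ^ (1/α)))) (𝓝[>] 0)
        (𝓝 (T ((τ - s) ^ (1/α)) (u (s ^ (1/α))))) := by
      have hc1 : ContinuousAt (fun ρ : ℝ => T (ρ ^ (1/α)) (u (s ^ (1/α)))) (τ - s) :=
        (hSderiv (τ - s) (by linarith) _).continuousAt
      have haff : Tendsto (fun h : ℝ => τ - s + h) (𝓝[>] 0) (𝓝 (τ - s)) := by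
        have hcadd : Continuous (fun h : ℝ => τ - s + h) := continuous_const.add continuous_id
        have := (hcadd.tendsto 0).mono_left (nhdsWithin_le_nhds (s := Ioi (0:ℝ)))
        simpa using this
      exact hc1.tendsto.comp haff
    refine tendsto_nhds_unique (h1.congr' ?_) h2
    filter_upwards [self_mem_nhdsWithin] with h hh
    exact hfun h hh
  -- endpoint at 0
  have key3 : ∀ τ > (0:ℝ), u (τ ^ (1/α)) = T (τ ^ (1/α)) u₀ := by
    intro τ hτ
    obtain ⟨M, hM⟩ := hbound (τ/2) τ (by linarith)
    have hev : ∀ᶠ s in 𝓝[>] (0:ℝ),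
        ‖u (τ ^ (1/α)) - T (τ ^ (1/α)) u₀‖ ≤ M * ‖u (s ^ (1/α)) - T (s ^ (1/α)) u₀‖ := by
      filter_upwards [Ioo_mem_nhdsGT_of_mem
        (⟨le_refl (0:ℝ), by linarith⟩ : (0:ℝ) ∈ Ico (0:ℝ) (τ/2))] with s hs
      obtain ⟨hs0, hs2⟩ := hs
      have h1 : u (τ ^ (1/α)) = T ((τ - s) ^ (1/α)) (u (s ^ (1/α))) :=
        key2 τ hτ s hs0 (by linarith)
      have h2 : T (τ ^ (1/α)) u₀ = T ((τ - s) ^ (1/α)) (T (s ^ (1/α)) u₀) := by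
        have := hSadd (τ - s) s (by linarith) hs0.le u₀
        rw [sub_add_cancel] at this
        exact this
      rw [h1, h2, ← map_sub]
      calc ‖T ((τ - s) ^ (1/α)) (u (s ^ (1/α)) - T (s ^ (1/α)) u₀)‖
          ≤ ‖T ((τ - s) ^ (1/α))‖ * ‖u (s ^ (1/α)) - T (s ^ (1/α)) u₀‖ :=
            (T ((τ - s) ^ (1/α))).le_opNorm _
        _ ≤ M * ‖u (s ^ (1/α)) - T (s ^ (1/α)) u₀‖ :=
            mul_le_mul_of_nonneg_right (hM _ ⟨by linarith, by linarith⟩) (norm_nonneg _)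
    have hlim : Tendsto (fun s : ℝ => M * ‖u (s ^ (1/α)) - T (s ^ (1/α)) u₀‖)
        (𝓝[>] 0) (𝓝 0) := by
      have := ((hvc0.sub (hSc0 u₀)).norm.const_mul M)
      simpa using this
    have hle : ‖u (τ ^ (1/α)) - T (τ ^ (1/α)) u₀‖ ≤ 0 := ge_of_tendsto hlim hev
    have := norm_le_zero_iff.mp hle
    exact sub_eq_zero.mp this
  -- conclusion
  intro t ht
  rcases eq_or_lt_of_le ht with h0 | hpos
  · rw [← h0, hu0, hT0]
    rfl
  · have hτ : 0 < t ^ α := Real.rpow_pos_of_pos hpos α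
    have ht' : (t ^ α) ^ (1/α) = t := by
      rw [← Real.rpow_mul hpos.le]
      rw [show α * (1/α) = 1 by field_simp, Real.rpow_one]
    have := key3 (t ^ α) hτ
    rwa [ht'] at this
end
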